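/- Let n ≥ 2 and 0 < δ < 1. There exist constants c = c(n,δ) > 0 and C = C(n,δ) > 0 such that the following holds: for every symmetric positive definite matrix B ∈ ℝ^{n×n} and every nonzero symmetric matrix A ∈ ℝ^{n×n} satisfying (n−1+δ)·⟨B⁻¹A,(B⁻¹A)ᵀ⟩ ≤ (tr(B⁻¹A))², and for every symmetric matrix M ∈ ℝ^{n×n}, one has c·⟨BM,(BM)ᵀ⟩ ≤ ⟨BM,(BM)ᵀ⟩ − (tr(BM))² + (C/⟨B⁻¹A,(B⁻¹A)ᵀ⟩)·⟨A,M⟩². -/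

import Mathlib

set_option maxHeartbeats 1000000

open Matrix

lemma key_ineq {ι : Type*} [Fintype ι] (δ r : ℝ) (hδ0 : 0 < δ) (hδ1 : δ < 1)
    (a u y : ι → ℝ) (hu : ∑ i, (u i) ^ 2 = r)
    (hα : 0 < ∑ i, (a i) ^ 2)
    (hcond : (r - 1 + δ) * (∑ i, (a i) ^ 2) ≤ (∑ i, a i * u i) ^ 2) :
    (δ/2) * (∑ i, (y i) ^ 2) ≤ (∑ i, (y i) ^ 2) - (∑ i, u i * y i) ^ 2
      + ((r * (2-δ)/δ) / (∑ i, (a i) ^ 2)) * (∑ i, a i * y i) ^ 2 := by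
  obtain ⟨α, hαd⟩ : ∃ x : ℝ, x = ∑ i, (a i)^2 := ⟨_, rfl⟩
  obtain ⟨β, hβd⟩ : ∃ x : ℝ, x = ∑ i, a i * u i := ⟨_, rfl⟩
  obtain ⟨γ, hγd⟩ : ∃ x : ℝ, x = ∑ i, a i * y i := ⟨_, rfl⟩
  obtain ⟨μ, hμd⟩ : ∃ x : ℝ, x = ∑ i, u i * y i := ⟨_, rfl⟩
  obtain ⟨Y, hYd⟩ : ∃ x : ℝ, x = ∑ i, (y i)^2 := ⟨_, rfl⟩
  rw [← hαd] at hα hcond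
  rw [← hβd] at hcond
  rw [← hαd, ← hγd, ← hμd, ← hYd]
  have expz : ∑ i, (α * y i - γ * a i)^2 = α * (α*Y - γ^2) := by
    have h : ∀ i, (α * y i - γ * a i)^2
        = α^2*((y i)^2) - (2*α*γ)*(a i * y i) + γ^2*((a i)^2) := fun i => by ring
    rw [Finset.sum_congr rfl fun i _ => h i, Finset.sum_add_distrib, Finset.sum_sub_distrib,
      ← Finset.mul_sum, ← Finset.mul_sum, ← Finset.mul_sum, ← hYd, ← hγd, ← hαd]
    ring
  have expw : ∑ i, (α * u i - β * a i)^2 = α * (α*r - β^2) := by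
    have h : ∀ i, (α * u i - β * a i)^2
        = α^2*((u i)^2) - (2*α*β)*(a i * u i) + β^2*((a i)^2) := fun i => by ring
    rw [Finset.sum_congr rfl fun i _ => h i, Finset.sum_add_distrib, Finset.sum_sub_distrib,
      ← Finset.mul_sum, ← Finset.mul_sum, ← Finset.mul_sum, hu, ← hβd, ← hαd]
    ring
  have expwz : ∑ i, (α * u i - β * a i) * (α * y i - γ * a i) = α * (α*μ - β*γ) := by
    have h : ∀ i, (α * u i - β * a i) * (α * y i - γ * a i)
        = α^2*(u i * y i) - (α*γ)*(a i * u i) - (α*β)*(a i * y i) + (β*γ)*((a i)^2) :=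
      fun i => by ring
    rw [Finset.sum_congr rfl fun i _ => h i, Finset.sum_add_distrib, Finset.sum_sub_distrib,
      Finset.sum_sub_distrib, ← Finset.mul_sum, ← Finset.mul_sum, ← Finset.mul_sum,
      ← Finset.mul_sum, ← hμd, ← hβd, ← hγd, ← hαd]
    ring
  have hP : 0 ≤ α*Y - γ^2 := by
    have h0 : 0 ≤ ∑ i, (α * y i - γ * a i)^2 := Finset.sum_nonneg fun i _ => sq_nonneg _
    rw [expz] at h0
    nlinarith [hα]
  have hCSau : β^2 ≤ α*r := by
    have := Finset.sum_mul_sq_le_sq_mul_sq Finset.univ a u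
    rw [hu, ← hβd, ← hαd] at this
    exact this
  have hQ0 : 0 ≤ α*r - β^2 := by linarith
  have hQ : α*r - β^2 ≤ (1-δ)*α := by nlinarith
  have hT : (α*μ - β*γ)^2 ≤ (α*r - β^2)*(α*Y - γ^2) := by
    have h := Finset.sum_mul_sq_le_sq_mul_sq Finset.univ
      (fun i => α * u i - β * a i) (fun i => α * y i - γ * a i)
    rw [expw, expz, expwz] at h
    have h2 : α^2 * ((α*μ - β*γ)^2) ≤ α^2 * ((α*r - β^2)*(α*Y - γ^2)) := by nlinarith [h]
    exact le_of_mul_le_mul_left h2 (by positivity)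
  have e1 : (α*μ - β*γ)^2 ≤ (1-δ)*(α*(α*Y-γ^2)) := by
    have h3 : (α*r - β^2)*(α*Y - γ^2) ≤ ((1-δ)*α)*(α*Y - γ^2) :=
      mul_le_mul_of_nonneg_right hQ hP
    nlinarith [hT, h3]
  have hint2 : δ*(2-δ)*((α*μ - β*γ)^2) ≤ δ*(2-δ)*((1-δ)*(α*(α*Y-γ^2))) :=
    mul_le_mul_of_nonneg_left e1 (by nlinarith)
  have hint3 : 2*(1-δ)*(2-δ)*(β^2*γ^2) ≤ 2*(1-δ)*(2-δ)*((α*r)*γ^2) :=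
    mul_le_mul_of_nonneg_left (mul_le_mul_of_nonneg_right hCSau (sq_nonneg γ)) (by nlinarith)
  have hint1 : 0 ≤ (2*(1-δ)*(β*γ) - δ*(α*μ-β*γ))^2 := sq_nonneg _
  have hmain : (2*(1-δ)*α) * (δ*(α*μ^2)) ≤
      (2*(1-δ)*α) * ((2-δ)*r*γ^2 + (2-δ)*δ/2*(α*Y-γ^2)) := by
    nlinarith [hint1, hint2, hint3, hα, hδ0, hδ1]
  have hmain2 : δ*(α*μ^2) ≤ (2-δ)*r*γ^2 + (2-δ)*δ/2*(α*Y-γ^2) :=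
    le_of_mul_le_mul_left hmain (by nlinarith)
  have hpos : (0:ℝ) < δ*α := mul_pos hδ0 hα
  rw [← mul_le_mul_iff_right₀ hpos]
  have he : δ*α*(Y - μ^2 + (r*(2-δ)/δ/α)*γ^2) = δ*α*Y - δ*(α*μ^2) + r*(2-δ)*γ^2 := by
    field_simp
  rw [he]
  nlinarith [hmain2, mul_nonneg (mul_nonneg hδ0.le (by linarith : (0:ℝ) ≤ 2-δ)) (sq_nonneg γ)]

lemma sum2trace {n : ℕ} (X Y : Matrix (Fin n) (Fin n) ℝ) :
    (∑ i, ∑ j, X i j * Y j i) = trace (X * Y) := by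
  simp [Matrix.trace, Matrix.mul_apply, Matrix.diag]

lemma trace_symm_sq {n : ℕ} (S : Matrix (Fin n) (Fin n) ℝ) (hS : S.IsSymm) :
    trace (S * S) = ∑ p : Fin n × Fin n, (S p.1 p.2)^2 := by
  rw [← sum2trace, Fintype.sum_prod_type]
  exact Finset.sum_congr rfl fun i _ => Finset.sum_congr rfl fun j _ => by
    rw [hS.apply i j, pow_two]

lemma trace_mul_symm {n : ℕ} (X S : Matrix (Fin n) (Fin n) ℝ) (hS : S.IsSymm) :
    trace (X * S) = ∑ p : Fin n × Fin n, X p.1 p.2 * S p.1 p.2 := by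
  rw [← sum2trace, Fintype.sum_prod_type]
  exact Finset.sum_congr rfl fun i _ => Finset.sum_congr rfl fun j _ => by
    rw [hS.apply i j]

lemma sum_one_diag {n : ℕ} (S : Matrix (Fin n) (Fin n) ℝ) :
    (∑ p : Fin n × Fin n, S p.1 p.2 * (1 : Matrix (Fin n) (Fin n) ℝ) p.1 p.2) = trace S := by
  rw [Fintype.sum_prod_type]
  simp [Matrix.one_apply, Matrix.trace, Matrix.diag]

lemma sum_diag_one {n : ℕ} (S : Matrix (Fin n) (Fin n) ℝ) :
    (∑ p : Fin n × Fin n, (1 : Matrix (Fin n) (Fin n) ℝ) p.1 p.2 * S p.1 p.2) = trace S := by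
  rw [Fintype.sum_prod_type]
  simp [Matrix.one_apply, Matrix.trace, Matrix.diag]

lemma sum_one_sq {n : ℕ} :
    (∑ p : Fin n × Fin n, ((1 : Matrix (Fin n) (Fin n) ℝ) p.1 p.2)^2) = (n : ℝ) := by
  rw [Fintype.sum_prod_type]
  simp [Matrix.one_apply]

/-- Cordes' matrix inequality with respect to a symmetric positive
definite matrix `B`. -/
theorem stmt_2 (n : ℕ) (hn : 2 ≤ n) (δ : ℝ) (hδ0 : 0 < δ) (hδ1 : δ < 1) :
    ∃ c C : ℝ, 0 < c ∧ 0 < C ∧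
      ∀ B A M : Matrix (Fin n) (Fin n) ℝ,
        B.IsSymm → B.PosDef → A.IsSymm → A ≠ 0 →
        ((n : ℝ) - 1 + δ) * (∑ i, ∑ j, (B⁻¹ * A) i j * ((B⁻¹ * A)ᵀ) i j)
          ≤ (Matrix.trace (B⁻¹ * A)) ^ 2 →
        M.IsSymm →
        c * (∑ i, ∑ j, (B * M) i j * ((B * M)ᵀ) i j) ≤
          (∑ i, ∑ j, (B * M) i j * ((B * M)ᵀ) i j) - (Matrix.trace (B * M)) ^ 2
            + (C / (∑ i, ∑ j, (B⁻¹ * A) i j * ((B⁻¹ * A)ᵀ) i j))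
              * (∑ i, ∑ j, A i j * M i j) ^ 2 := by
  have hn2 : (2:ℝ) ≤ (n:ℝ) := by exact_mod_cast hn
  refine ⟨δ/2, (n:ℝ) * (2-δ)/δ, by positivity,
    div_pos (mul_pos (by linarith) (by linarith)) hδ0, ?_⟩
  intro B A M hBs hB hAs hA0 hcond hMs
  have hBdet : IsUnit B.det := isUnit_iff_ne_zero.mpr (ne_of_gt hB.det_pos)
  have hBinv : B⁻¹ * B = 1 := nonsing_inv_mul B hBdet
  have hBinv' : B * B⁻¹ = 1 := mul_nonsing_inv B hBdet
  obtain ⟨R, hRR, hRsymm⟩ : ∃ R : Matrix (Fin n) (Fin n) ℝ, R * R = B ∧ Rᵀ = R := by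
    open scoped MatrixOrder in
    obtain ⟨X, hX, -, hXX⟩ := CFC.exists_sqrt_of_isSelfAdjoint_of_quasispectrumRestricts
      hB.isHermitian.isSelfAdjoint (QuasispectrumRestricts.nnreal_of_nonneg hB.posSemidef.nonneg)
    refine ⟨X, hXX, ?_⟩
    have h : X.IsHermitian := hX
    rwa [Matrix.IsHermitian, Matrix.conjTranspose_eq_transpose_of_trivial] at h
  have hRdetU : IsUnit R.det := by
    have h : R.det * R.det = B.det := by rw [← Matrix.det_mul, hRR]
    refine isUnit_iff_ne_zero.mpr fun h0 => ?_
    rw [h0, mul_zero] at h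
    exact (ne_of_gt hB.det_pos) h.symm
  have hRinv : R⁻¹ * R = 1 := nonsing_inv_mul R hRdetU
  have hRinv' : R * R⁻¹ = 1 := mul_nonsing_inv R hRdetU
  have hBinvsymm : (B⁻¹)ᵀ = B⁻¹ := by rw [Matrix.transpose_nonsing_inv, hBs.eq]
  set N := B⁻¹ * A * B⁻¹ with hNdef
  set Ah := R * N * R with hAhdef
  set Yh := R * M * R with hYhdef
  have trhat : ∀ Z : Matrix (Fin n) (Fin n) ℝ, trace (R * Z * R) = trace (Z * B) := by
    intro Z; rw [Matrix.mul_assoc, trace_mul_comm, Matrix.mul_assoc, hRR]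
  have hNB : N * B = B⁻¹ * A := by
    rw [hNdef, Matrix.mul_assoc (B⁻¹ * A) B⁻¹ B, hBinv, Matrix.mul_one]
  have t1 : trace (Ah * Ah) = trace ((B⁻¹ * A) * (B⁻¹ * A)) := by
    have e : Ah * Ah = R * (N * B * N) * R := by
      rw [hAhdef, ← hRR]; noncomm_ring
    rw [e, trhat, hNB, Matrix.mul_assoc, hNB]
  have t2 : trace Ah = trace (B⁻¹ * A) := by
    rw [hAhdef, trhat, hNB]
  have t3 : trace (Yh * Yh) = trace ((B * M) * (B * M)) := by
    have e : Yh * Yh = R * (M * B * M) * R := by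
      rw [hYhdef, ← hRR]; noncomm_ring
    rw [e, trhat]
    rw [show M * B * M * B = (M * B) * (M * B) from by noncomm_ring,
      trace_mul_comm, show (M * B) * (M * B) = (M * (B * M)) * B from by noncomm_ring,
      trace_mul_comm, show B * (M * (B * M)) = (B * M) * (B * M) from by noncomm_ring]
  have t4 : trace Yh = trace (B * M) := by rw [hYhdef, trhat, trace_mul_comm]
  have t5 : trace (Ah * Yh) = trace (A * M) := by
    have e : Ah * Yh = R * (N * B * M) * R := by
      rw [hAhdef, hYhdef, ← hRR]; noncomm_ring
    rw [e, trhat, hNB, show B⁻¹ * A * M * B = B⁻¹ * (A * M * B) from by noncomm_ring,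
      trace_mul_comm, show A * M * B * B⁻¹ = A * M * (B * B⁻¹) from by noncomm_ring,
      hBinv', Matrix.mul_one]
  have hNs : Nᵀ = N := by
    rw [hNdef, Matrix.transpose_mul, Matrix.transpose_mul, hBinvsymm, hAs.eq]
    noncomm_ring
  have hAhs : Ah.IsSymm := by
    rw [Matrix.IsSymm, hAhdef, Matrix.transpose_mul, Matrix.transpose_mul, hRsymm, hNs]
    noncomm_ring
  have hYhs : Yh.IsSymm := by
    rw [Matrix.IsSymm, hYhdef, Matrix.transpose_mul, Matrix.transpose_mul, hRsymm, hMs.eq]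
    noncomm_ring
  have hAh0 : Ah ≠ 0 := by
    intro h
    apply hA0
    have hN0 : N = 0 := by
      have e : R⁻¹ * Ah * R⁻¹ = (R⁻¹ * R) * N * (R * R⁻¹) := by
        rw [hAhdef]; noncomm_ring
      rw [hRinv, hRinv', Matrix.one_mul, Matrix.mul_one] at e
      rw [← e, h, Matrix.mul_zero, Matrix.zero_mul]
    have e : B * N * B = (B * B⁻¹) * A * (B⁻¹ * B) := by rw [hNdef]; noncomm_ring
    rw [hBinv, hBinv', Matrix.one_mul, Matrix.mul_one] at e
    rw [← e, hN0, Matrix.mul_zero, Matrix.zero_mul]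
  clear_value N Ah Yh
  -- translate the statement sums
  have E1 : (∑ i, ∑ j, (B⁻¹ * A) i j * ((B⁻¹ * A)ᵀ) i j)
      = ∑ p : Fin n × Fin n, (Ah p.1 p.2)^2 := by
    simp only [Matrix.transpose_apply]
    rw [sum2trace, ← t1, trace_symm_sq Ah hAhs]
  have E3 : (∑ i, ∑ j, (B * M) i j * ((B * M)ᵀ) i j)
      = ∑ p : Fin n × Fin n, (Yh p.1 p.2)^2 := by
    simp only [Matrix.transpose_apply]
    rw [sum2trace, ← t3, trace_symm_sq Yh hYhs]
  have E2 : trace (B⁻¹ * A) = ∑ p : Fin n × Fin n, Ah p.1 p.2 *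
      (1 : Matrix (Fin n) (Fin n) ℝ) p.1 p.2 := by
    rw [sum_one_diag, t2]
  have E4 : trace (B * M) = ∑ p : Fin n × Fin n,
      (1 : Matrix (Fin n) (Fin n) ℝ) p.1 p.2 * Yh p.1 p.2 := by
    rw [sum_diag_one, t4]
  have E5 : (∑ i, ∑ j, A i j * M i j)
      = ∑ p : Fin n × Fin n, Ah p.1 p.2 * Yh p.1 p.2 := by
    have h1 : (∑ i, ∑ j, A i j * M i j) = trace (A * M) := by
      rw [← sum2trace]
      exact Finset.sum_congr rfl fun i _ => Finset.sum_congr rfl fun j _ => by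
        rw [hMs.apply i j]
    rw [h1, ← t5, trace_mul_symm Ah Yh hYhs]
  have hα : 0 < ∑ p : Fin n × Fin n, (Ah p.1 p.2)^2 := by
    refine Finset.sum_pos' (fun p _ => sq_nonneg _) ?_
    by_contra hc
    push_neg at hc
    apply hAh0
    ext i j
    have := hc (i, j) (Finset.mem_univ _)
    have h0 : (Ah i j)^2 = 0 := le_antisymm this (sq_nonneg _)
    simpa using pow_eq_zero_iff (n := 2) (by norm_num) |>.mp h0
  rw [E1, E2] at hcond
  rw [E3, E4, E1, E5]
  exact key_ineq δ (n:ℝ) hδ0 hδ1 (fun p : Fin n × Fin n => Ah p.1 p.2)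
    (fun p : Fin n × Fin n => (1 : Matrix (Fin n) (Fin n) ℝ) p.1 p.2)
    (fun p : Fin n × Fin n => Yh p.1 p.2) sum_one_sq hα hcond
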